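/- Let X_1, ..., X_m be identically distributed real-valued random variables that are positively associated (i.e., satisfy the FKG inequality: E[fg] ≥ E[f]E[g] for all increasing bounded measurable functions f, g of (X_1,...,X_m)). Then for every N ≥ 0, P(X_1 ≤ N) ≤ P(X_1 + ... + X_m ≤ mN)^{1/m}. -/

import Mathlib

open MeasureTheory ProbabilityTheory

/-- Positive association (FKG) implies `P(X₁ ≤ N) ≤ P(X₁+⋯+X_m ≤ mN)^{1/m}`
for identically distributed random variables. -/
theorem stmt0 {Ω : Type*} [MeasureSpace Ω] [IsProbabilityMeasure (ℙ : Measure Ω)]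
    (m : ℕ) (hm : 0 < m) (X : Fin m → Ω → ℝ)
    (hmeas : ∀ i, Measurable (X i))
    (hident : ∀ i, Measure.map (X i) ℙ = Measure.map (X ⟨0, hm⟩) ℙ)
    (hFKG : ∀ f g : (Fin m → ℝ) → ℝ, Measurable f → Measurable g →
      (∃ C, ∀ v, |f v| ≤ C) → (∃ C, ∀ v, |g v| ≤ C) →
      Monotone f → Monotone g →
      (∫ ω, f (fun i => X i ω) ∂ℙ) * ∫ ω, g (fun i => X i ω) ∂ℙ ≤
        ∫ ω, f (fun i => X i ω) * g (fun i => X i ω) ∂ℙ)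
    (N : ℝ) (hN : 0 ≤ N) :
    ℙ {ω | X ⟨0, hm⟩ ω ≤ N} ≤ (ℙ {ω | ∑ i, X i ω ≤ m * N}) ^ (1 / (m : ℝ)) := by
  -- FKG for antitone functions, by applying hFKG to the negations
  have hFKG' : ∀ f g : (Fin m → ℝ) → ℝ, Measurable f → Measurable g →
      (∃ C, ∀ v, |f v| ≤ C) → (∃ C, ∀ v, |g v| ≤ C) →
      Antitone f → Antitone g →
      (∫ ω, f (fun i => X i ω) ∂ℙ) * ∫ ω, g (fun i => X i ω) ∂ℙ ≤
        ∫ ω, f (fun i => X i ω) * g (fun i => X i ω) ∂ℙ := by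
    intro f g hf hg hCf hCg haf hag
    obtain ⟨Cf, hCf⟩ := hCf
    obtain ⟨Cg, hCg⟩ := hCg
    have h := hFKG (fun v => -f v) (fun v => -g v) hf.neg hg.neg
      ⟨Cf, fun v => by simpa using hCf v⟩ ⟨Cg, fun v => by simpa using hCg v⟩
      (fun a b h => by simpa using haf h) (fun a b h => by simpa using hag h)
    simpa [integral_neg, neg_mul_neg] using h
  -- sets
  set S : Finset (Fin m) → Set (Fin m → ℝ) := fun s => {v | ∀ i ∈ s, v i ≤ N} with hS
  set A : Finset (Fin m) → Set Ω := fun s => {ω | ∀ i ∈ s, X i ω ≤ N} with hA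
  have hSmeas : ∀ s, MeasurableSet (S s) := by
    intro s
    have : S s = ⋂ i ∈ s, {v : Fin m → ℝ | v i ≤ N} := by ext v; simp [hS]
    rw [this]
    exact MeasurableSet.biInter s.countable_toSet fun i _ =>
      measurableSet_le (measurable_pi_apply i) measurable_const
  have hAmeas : ∀ s, MeasurableSet (A s) := by
    intro s
    have : A s = ⋂ i ∈ s, {ω | X i ω ≤ N} := by ext ω; simp [hA]
    rw [this]
    exact MeasurableSet.biInter s.countable_toSet fun i _ =>
      measurableSet_le (hmeas i) measurable_const
  -- integral of indicator composed with X
  have hint : ∀ s, (∫ ω, (S s).indicator (1 : (Fin m → ℝ) → ℝ) (fun i => X i ω) ∂ℙ)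
      = (ℙ (A s)).toReal := by
    intro s
    have heq : (fun ω => (S s).indicator (1 : (Fin m → ℝ) → ℝ) (fun i => X i ω))
        = (A s).indicator (1 : Ω → ℝ) := by
      ext ω
      by_cases h : ω ∈ A s
      · have h' : (fun i => X i ω) ∈ S s := h
        simp [Set.indicator_of_mem h', Set.indicator_of_mem h]
      · have h' : (fun i => X i ω) ∉ S s := h
        simp [Set.indicator_of_notMem h', Set.indicator_of_notMem h]
    rw [heq, MeasureTheory.integral_indicator_one (hAmeas s)]
    rfl
  -- all singleton probabilities equal
  have hsingle : ∀ i, ℙ {ω | X i ω ≤ N} = ℙ {ω | X ⟨0, hm⟩ ω ≤ N} := by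
    intro i
    have h1 : ℙ {ω | X i ω ≤ N} = (Measure.map (X i) ℙ) (Set.Iic N) := by
      rw [Measure.map_apply (hmeas i) measurableSet_Iic]; rfl
    have h2 : ℙ {ω | X ⟨0, hm⟩ ω ≤ N} = (Measure.map (X ⟨0, hm⟩) ℙ) (Set.Iic N) := by
      rw [Measure.map_apply (hmeas _) measurableSet_Iic]; rfl
    rw [h1, h2, hident i]
  set p : ℝ := (ℙ {ω | X ⟨0, hm⟩ ω ≤ N}).toReal with hp
  -- main induction
  have main : ∀ s : Finset (Fin m), p ^ s.card ≤ (ℙ (A s)).toReal := by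
    intro s
    induction s using Finset.induction with
    | empty =>
      have : A ∅ = Set.univ := by ext ω; simp [hA]
      simp [this]
    | @insert j s hj ih =>
      have hind : ∀ s : Finset (Fin m), Antitone ((S s).indicator (1 : (Fin m → ℝ) → ℝ)) := by
        intro s v w hvw
        by_cases h : w ∈ S s
        · have hv : v ∈ S s := fun i hi => le_trans (hvw i) (h i hi)
          simp [Set.indicator_of_mem h, Set.indicator_of_mem hv]
        · simp only [Set.indicator_of_notMem h]
          exact Set.indicator_nonneg (fun _ _ => zero_le_one) v
      have hbd : ∀ s : Finset (Fin m), ∀ v, |(S s).indicator (1 : (Fin m → ℝ) → ℝ) v| ≤ 1 := by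
        intro s v
        by_cases h : v ∈ S s
        · simp [Set.indicator_of_mem h]
        · simp [Set.indicator_of_notMem h]
      have hmeas' : ∀ s : Finset (Fin m),
          Measurable ((S s).indicator (1 : (Fin m → ℝ) → ℝ)) :=
        fun s => (measurable_const.indicator (hSmeas s))
      have hkey := hFKG' ((S s).indicator 1) ((S {j}).indicator 1)
        (hmeas' s) (hmeas' {j}) ⟨1, hbd s⟩ ⟨1, hbd {j}⟩ (hind s) (hind {j})
      have hprod : ∀ v, (S s).indicator (1 : (Fin m → ℝ) → ℝ) v *
          (S {j}).indicator (1 : (Fin m → ℝ) → ℝ) v =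
          (S (insert j s)).indicator (1 : (Fin m → ℝ) → ℝ) v := by
        intro v
        have : S (insert j s) = S s ∩ S {j} := by
          ext w; constructor
          · intro h; exact ⟨fun i hi => h i (Finset.mem_insert_of_mem hi),
              fun i hi => h i (by simp at hi; simp [hi])⟩
          · rintro ⟨h1, h2⟩ i hi
            rcases Finset.mem_insert.mp hi with rfl | hi
            · exact h2 i (Finset.mem_singleton_self i)
            · exact h1 i hi
        rw [this, Set.inter_indicator_one]
        rfl
      rw [hint s, hint {j}] at hkey
      have hkey2 : (ℙ (A s)).toReal * (ℙ (A {j})).toReal ≤ (ℙ (A (insert j s))).toReal := by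
        calc (ℙ (A s)).toReal * (ℙ (A {j})).toReal
            ≤ ∫ ω, (S s).indicator (1 : (Fin m → ℝ) → ℝ) (fun i => X i ω) *
                (S {j}).indicator (1 : (Fin m → ℝ) → ℝ) (fun i => X i ω) ∂ℙ := hkey
          _ = ∫ ω, (S (insert j s)).indicator (1 : (Fin m → ℝ) → ℝ) (fun i => X i ω) ∂ℙ := by
              congr 1; ext ω; exact hprod _
          _ = (ℙ (A (insert j s))).toReal := hint _
      have hAj : ℙ (A {j}) = ℙ {ω | X ⟨0, hm⟩ ω ≤ N} := by
        have : A {j} = {ω | X j ω ≤ N} := by ext ω; simp [hA]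
        rw [this, hsingle j]
      rw [Finset.card_insert_of_notMem hj, pow_succ]
      calc p ^ s.card * p ≤ (ℙ (A s)).toReal * (ℙ (A {j})).toReal := by
            apply mul_le_mul ih (by rw [hAj]) (by positivity) ENNReal.toReal_nonneg
        _ ≤ (ℙ (A (insert j s))).toReal := hkey2
  -- apply to univ
  have huniv := main Finset.univ
  have hsub : A Finset.univ ⊆ {ω | ∑ i, X i ω ≤ m * N} := by
    intro ω hω
    have : ∑ i, X i ω ≤ ∑ _i : Fin m, N := Finset.sum_le_sum fun i _ => hω i (Finset.mem_univ i)
    simpa using this.trans_eq (by simp [mul_comm])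
  have hfinal : p ^ m ≤ (ℙ {ω | ∑ i, X i ω ≤ m * N}).toReal := by
    calc p ^ m = p ^ (Finset.univ : Finset (Fin m)).card := by simp
      _ ≤ (ℙ (A Finset.univ)).toReal := huniv
      _ ≤ (ℙ {ω | ∑ i, X i ω ≤ m * N}).toReal :=
          ENNReal.toReal_mono (measure_ne_top _ _) (measure_mono hsub)
  -- convert to ENNReal
  set a := ℙ {ω | X ⟨0, hm⟩ ω ≤ N} with ha
  set b := ℙ {ω | ∑ i, X i ω ≤ m * N} with hb
  have hpow : a ^ m ≤ b := by
    rw [← ENNReal.toReal_le_toReal (ENNReal.pow_ne_top (measure_ne_top _ _)) (measure_ne_top _ _)]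
    rw [ENNReal.toReal_pow]
    exact hfinal
  have hmne : (m : ℝ) ≠ 0 := Nat.cast_ne_zero.mpr hm.ne'
  calc a = (a ^ m) ^ (1 / (m : ℝ)) := by
        rw [← ENNReal.rpow_natCast a m, ← ENNReal.rpow_mul, mul_one_div_cancel hmne,
          ENNReal.rpow_one]
    _ ≤ b ^ (1 / (m : ℝ)) := ENNReal.rpow_le_rpow hpow (by positivity)
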